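/- Let f be a Boolean network on n+1 variables whose last component does not depend on the last coordinate, and let g be the reduction of f obtained by eliminating the last variable. Let i, j : Fin n. If component i of g depends on coordinate j, then either component (Fin.castSucc i) of f depends on coordinate (Fin.castSucc j), or both component (Fin.castSucc i) of f depends on the last coordinate Fin.last n and the last component of f depends on coordinate (Fin.castSucc j). In particular, every edge of the wiring diagram of g comes from a path of length one or two in the wiring diagram of f. -/

import Mathlib

/-- Component `i` of `f` depends on coordinate `j`. -/
def BoolNetDependsOn {m : ℕ} (f : (Fin m → Bool) → (Fin m → Bool)) (i j : Fin m) : Prop :=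
  ∃ (x : Fin m → Bool) (b : Bool), f (Function.update x j b) i ≠ f x i

/-- Every edge of the wiring diagram of the reduction `g` comes from
a path of length one or two in the wiring diagram of `f`. -/
theorem edge_of_reduction (n : ℕ)
    (f : (Fin (n+1) → Bool) → (Fin (n+1) → Bool))
    (hf : ∀ (x : Fin (n+1) → Bool) (b : Bool),
      f (Function.update x (Fin.last n) b) (Fin.last n) = f x (Fin.last n))
    (g : (Fin n → Bool) → (Fin n → Bool))
    (hg : ∀ (y : Fin n → Bool) (i : Fin n),
      g y i = f (Fin.snoc y (f (Fin.snoc y false) (Fin.last n))) (Fin.castSucc i))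
    (i j : Fin n) (h : BoolNetDependsOn g i j) :
    BoolNetDependsOn f (Fin.castSucc i) (Fin.castSucc j) ∨
      (BoolNetDependsOn f (Fin.castSucc i) (Fin.last n) ∧
        BoolNetDependsOn f (Fin.last n) (Fin.castSucc j)) := by
  obtain ⟨y, b, hne⟩ := h
  set y' := Function.update y j b with hy'
  rw [hg, hg] at hne
  set c : Bool := f (Fin.snoc y false) (Fin.last n) with hc
  set c' : Bool := f (Fin.snoc y' false) (Fin.last n) with hc'
  have hsnoc : ∀ d : Bool, (Fin.snoc y' d : Fin (n+1) → Bool)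
      = Function.update (Fin.snoc y d) (Fin.castSucc j) b := by
    intro d; rw [hy', Fin.snoc_update]
  by_cases hcc : c' = c
  · left
    refine ⟨Fin.snoc y c, b, ?_⟩
    rw [← hsnoc]
    rw [hcc] at hne
    exact hne
  · by_cases h1 : f (Fin.snoc y' c) (Fin.castSucc i) = f (Fin.snoc y c) (Fin.castSucc i)
    · right
      constructor
      · refine ⟨Fin.snoc y' c, c', ?_⟩
        rw [Fin.update_snoc_last, h1]
        exact hne
      · refine ⟨Fin.snoc y false, b, ?_⟩
        rw [← hsnoc]
        exact fun hh => hcc hh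
    · left
      refine ⟨Fin.snoc y c, b, ?_⟩
      rw [← hsnoc]
      exact h1
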